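/- arXiv:1503.05445 — 6 statements merged into one kernel-verified Lean document; each statement's English description precedes it below -/
import Mathlib

section
/- If the loop L(I, G, T, A) is unsafe — i.e., there is a finite trace x₀, ..., xₙ with I(x₀), T(xᵢ, xᵢ₊₁) and G(xᵢ) for i < n, ¬G(xₙ), and ¬A(xₙ) — then there exists a danger invariant (D, R): a predicate D and a function R : X → ℤ satisfying (1) ∃ x₀, I(x₀) ∧ D(x₀); (2) ∀ x, D(x) ∧ G(x) → R(x) > 0 ∧ ∃ x', T(x,x') ∧ D(x') ∧ R(x') < R(x); (3) ∀ x, D(x) ∧ ¬G(x) → ¬A(x). -/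
theorem danger_invariant_complete {X : Type*} (I G A : X → Prop) (T : X → X → Prop)
    (h : ∃ (n : ℕ) (x : ℕ → X), I (x 0) ∧ (∀ i < n, T (x i) (x (i+1)) ∧ G (x i)) ∧
      ¬ G (x n) ∧ ¬ A (x n)) :
    ∃ (D : X → Prop) (R : X → ℤ),
      (∃ x₀, I x₀ ∧ D x₀) ∧
      (∀ x, D x ∧ G x → R x > 0 ∧ ∃ x', T x x' ∧ D x' ∧ R x' < R x) ∧
      (∀ x, D x ∧ ¬ G x → ¬ A x) := by
  classical
  have hex : ∃ n, ∃ x : ℕ → X, I (x 0) ∧ (∀ i < n, T (x i) (x (i+1)) ∧ G (x i)) ∧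
      ¬ G (x n) ∧ ¬ A (x n) := h
  set m := Nat.find hex with hm
  obtain ⟨x, hI, hT, hGn, hAn⟩ := Nat.find_spec hex
  -- Key: in a minimal trace, no state revisits an earlier state.
  have key : ∀ i < m, ∀ k ≤ i, x (i+1) ≠ x k := by
    intro i hi k hk heq
    have hkm : k < m := lt_of_le_of_lt hk hi
    have him : i + 1 < m := by
      rcases lt_or_eq_of_le (Nat.succ_le_of_lt hi) with h' | h'
      · exact h'
      · refine absurd ((hT k hkm).2) ?_
        rw [← heq, show i + 1 = m from h']
        exact hGn
    set d := i + 1 - k with hd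
    have hd1 : 1 ≤ d := by omega
    have hkd : k + d = i + 1 := by omega
    set n' := m - d with hn'
    have hn'm : n' < m := by omega
    have hkn' : k < n' := by omega
    have hn'd : n' + d = m := by omega
    set y : ℕ → X := fun j => if j ≤ k then x j else x (j + d) with hy
    apply Nat.find_min hex hn'm
    refine ⟨y, ?_, ?_, ?_, ?_⟩
    · simpa [hy] using hI
    · intro j hj
      rcases lt_trichotomy j k with hjk | hjk | hjk
      · have h1 : y j = x j := by simp [hy, le_of_lt hjk]
        have h2 : y (j+1) = x (j+1) := by
          have : j + 1 ≤ k := hjk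
          simp [hy, this]
        rw [h1, h2]
        exact hT j (by omega)
      · subst hjk
        have h1 : y j = x j := by simp [hy]
        have h2 : y (j+1) = x (j+1+d) := by simp [hy]
        rw [h1, h2]
        constructor
        · have : x j = x (j + d) := by rw [heq.symm, hkd]
          rw [this]
          have := (hT (j + d) (by omega)).1
          convert this using 2
          omega
        · exact (hT j (by omega)).2
      · have h1 : y j = x (j + d) := by simp [hy, not_le.mpr hjk]
        have h2 : y (j+1) = x (j+1+d) := by
          have : ¬ (j + 1 ≤ k) := by omega
          simp [hy, this]
        rw [h1, h2]
        have := hT (j + d) (by omega)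
        refine ⟨?_, this.2⟩
        convert this.1 using 2
        omega
    · have h1 : y n' = x m := by
        have : ¬ (n' ≤ k) := by omega
        simp [hy, this, hn'd]
      rw [h1]; exact hGn
    · have h1 : y n' = x m := by
        have : ¬ (n' ≤ k) := by omega
        simp [hy, this, hn'd]
      rw [h1]; exact hAn
  refine ⟨fun z => ∃ i, i ≤ m ∧ z = x i,
    fun z => if h : ∃ i, i ≤ m ∧ z = x i then (m : ℤ) - Nat.find h else 0,
    ⟨x 0, hI, 0, Nat.zero_le _, rfl⟩, ?_, ?_⟩
  · rintro z ⟨hD, hGz⟩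
    obtain ⟨hile, hz⟩ := Nat.find_spec hD
    set i := Nat.find hD with hi
    have him : i < m := by
      rcases lt_or_eq_of_le hile with h' | h'
      · exact h'
      · have hg : G (x i) := hz ▸ hGz
        rw [h'] at hg
        exact absurd hg hGn
    have hD' : ∃ j, j ≤ m ∧ x (i+1) = x j := ⟨i+1, him, rfl⟩
    have hfind' : Nat.find hD' = i + 1 := by
      obtain ⟨hjle, hj⟩ := Nat.find_spec hD'
      have hle : Nat.find hD' ≤ i + 1 := Nat.find_le ⟨le_refl _ |>.trans him, rfl⟩
      rcases lt_or_eq_of_le hle with h' | h'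
      · exact absurd hj (key i him _ (by omega))
      · exact h'
    refine ⟨?_, x (i+1), hz ▸ (hT i him).1, ⟨i+1, him, rfl⟩, ?_⟩
    · show (if h : ∃ i ≤ m, z = x i then (m : ℤ) - Nat.find h else 0) > 0
      rw [dif_pos hD]
      have : (i : ℤ) < m := by exact_mod_cast him
      omega
    · show (if h : ∃ j ≤ m, x (i+1) = x j then (m : ℤ) - Nat.find h else 0) <
        (if h : ∃ i ≤ m, z = x i then (m : ℤ) - Nat.find h else 0)
      rw [dif_pos hD, dif_pos hD', hfind']
      push_cast
      omega
  · rintro z ⟨⟨i, hile, hz⟩, hGz⟩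
    rcases lt_or_eq_of_le hile with h' | h'
    · exact absurd (hz ▸ (hT i h').2) hGz
    · rw [hz, h']
      exact hAn
end

section
/- The loop L(I, G, T, A) is unsafe if and only if there exists a danger invariant for it. (Combination of soundness and completeness.) -/
theorem danger_invariant_iff_unsafe {X : Type*} (I G A : X → Prop) (T : X → X → Prop) :
    (∃ (n : ℕ) (x : ℕ → X), I (x 0) ∧ (∀ i < n, G (x i) ∧ T (x i) (x (i+1))) ∧
      ¬ G (x n) ∧ ¬ A (x n)) ↔
    (∃ (D : X → Prop) (R : X → ℤ),
      (∃ x₀, I x₀ ∧ D x₀) ∧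
      (∀ x, D x ∧ G x → R x > 0 ∧ ∃ x', T x x' ∧ D x' ∧ R x' < R x) ∧
      (∀ x, D x ∧ ¬ G x → ¬ A x)) := by
  classical
  constructor
  · rintro ⟨n, x, hI, hstep, hG, hA⟩
    set g : X → ℕ := fun y => Nat.findGreatest (fun i => y = x i) n with hg
    refine ⟨fun y => ∃ i ≤ n, y = x i, fun y => (n : ℤ) - g y,
      ⟨x 0, hI, 0, Nat.zero_le n, rfl⟩, ?_, ?_⟩
    · rintro y ⟨⟨i, hin, hyx⟩, hGy⟩
      have hspec : y = x (g y) := by simpa using Nat.findGreatest_spec (P := fun i => y = x i) hin hyx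
      have hgle : g y ≤ n := Nat.findGreatest_le n
      have hglt : g y < n := by
        rcases lt_or_eq_of_le hgle with h | h
        · exact h
        · exfalso; apply hG; rw [← h, ← hspec]; exact hGy
      constructor
      · show (0:ℤ) < (n:ℤ) - (g y : ℤ)
        have : (g y : ℤ) < n := by exact_mod_cast hglt
        omega
      · refine ⟨x (g y + 1), ?_, ⟨g y + 1, hglt, rfl⟩, ?_⟩
        · have := (hstep (g y) hglt).2
          rwa [← hspec] at this
        · have hle : g y + 1 ≤ g (x (g y + 1)) :=
            Nat.le_findGreatest hglt rfl
          have h1 : (g (x (g y + 1)) : ℤ) ≥ (g y : ℤ) + 1 := by exact_mod_cast hle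
          show (n:ℤ) - (g (x (g y + 1)) : ℤ) < (n:ℤ) - (g y : ℤ)
          omega
    · rintro y ⟨⟨i, hin, hyx⟩, hGy⟩
      rcases lt_or_eq_of_le hin with h | h
      · exact absurd (hyx ▸ (hstep i h).1) hGy
      · rw [hyx, h]; exact hA
  · rintro ⟨D, R, ⟨x₀, hI, hD⟩, hstep, hsafe⟩
    have key : ∀ k (y : X), D y → (R y).toNat ≤ k →
        ∃ (n : ℕ) (x : ℕ → X), x 0 = y ∧ (∀ i < n, G (x i) ∧ T (x i) (x (i+1))) ∧
          ¬ G (x n) ∧ ¬ A (x n) := by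
      intro k
      induction k with
      | zero =>
        intro y hy hk
        by_cases hGy : G y
        · have := (hstep y ⟨hy, hGy⟩).1
          omega
        · exact ⟨0, fun _ => y, rfl, by simp, hGy, hsafe y ⟨hy, hGy⟩⟩
      | succ k ih =>
        intro y hy hk
        by_cases hGy : G y
        · obtain ⟨hR, x', hT, hD', hR'⟩ := hstep y ⟨hy, hGy⟩
          have hk' : (R x').toNat ≤ k := by omega
          obtain ⟨n, z, hz0, hzstep, hzG, hzA⟩ := ih x' hD' hk'
          refine ⟨n + 1, fun i => if i = 0 then y else z (i - 1), rfl, ?_, ?_, ?_⟩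
          · intro i hi
            rcases Nat.eq_zero_or_pos i with h0 | h0
            · subst h0
              simp only [if_pos rfl, if_neg (Nat.one_ne_zero)]
              exact ⟨hGy, by simpa [hz0] using hT⟩
            · have h1 : i ≠ 0 := Nat.pos_iff_ne_zero.mp h0
              have h2 : i + 1 ≠ 0 := by omega
              simp only [if_neg h1, if_neg h2]
              have : i - 1 < n := by omega
              have := hzstep (i - 1) this
              have heq : i - 1 + 1 = i + 1 - 1 := by omega
              rw [heq] at this
              exact this
          · simpa using hzG
          · simpa using hzA
        · exact ⟨0, fun _ => y, rfl, by simp, hGy, hsafe y ⟨hy, hGy⟩⟩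
    obtain ⟨n, x, hx0, h1, h2, h3⟩ := key (R x₀).toNat x₀ hD le_rfl
    exact ⟨n, x, hx0 ▸ hI, h1, h2, h3⟩
end

section
/- A loop cannot have both a safety invariant and a danger invariant: if S satisfies the safety invariant conditions and (D, R) satisfies the danger invariant conditions for the same loop L(I, G, T, A), then we obtain a contradiction. -/
theorem no_safety_and_danger {X : Type*} (I G A : X → Prop) (T : X → X → Prop)
    (S D : X → Prop) (R : X → ℤ)
    (hS1 : ∀ x, I x → S x)
    (hS2 : ∀ x x', S x ∧ G x ∧ T x x' → S x')
    (hS3 : ∀ x, S x ∧ ¬ G x → A x)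
    (hD1 : ∃ x₀, I x₀ ∧ D x₀)
    (hD2 : ∀ x, D x ∧ G x → R x > 0 ∧ ∃ x', T x x' ∧ D x' ∧ R x' < R x)
    (hD3 : ∀ x, D x ∧ ¬ G x → ¬ A x) :
    False := by
  obtain ⟨x₀, hI, hD⟩ := hD1
  have key : ∀ n : ℕ, ∀ x, (R x).toNat ≤ n → S x → D x → False := by
    intro n
    induction n with
    | zero =>
      intro x hle hs hd
      by_cases hg : G x
      · obtain ⟨hpos, _⟩ := hD2 x ⟨hd, hg⟩
        omega
      · exact hD3 x ⟨hd, hg⟩ (hS3 x ⟨hs, hg⟩)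
    | succ n ih =>
      intro x hle hs hd
      by_cases hg : G x
      · obtain ⟨hpos, x', hT, hd', hlt⟩ := hD2 x ⟨hd, hg⟩
        exact ih x' (by omega) (hS2 x x' ⟨hs, hg, hT⟩) hd'
      · exact hD3 x ⟨hd, hg⟩ (hS3 x ⟨hs, hg⟩)
  exact key (R x₀).toNat x₀ le_rfl (hS1 x₀ hI) hD
end

section
/- If the state space X is finite and the loop has no safety invariant, then it has a danger invariant. Equivalently, over a finite state space, for every loop L(I, G, T, A), either there exists a safety invariant S or there exists a danger invariant (D, R) (as in the generalised safety formula [GS]). -/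
open Classical in
/-- Error reachable within `n` steps. -/
def Badn {X : Type*} (G A : X → Prop) (T : X → X → Prop) : ℕ → X → Prop
  | 0, x => ¬G x ∧ ¬A x
  | n+1, x => (¬G x ∧ ¬A x) ∨ (G x ∧ ∃ x', T x x' ∧ Badn G A T n x')

theorem safety_or_danger_finite {X : Type*} [Fintype X]
    (I G A : X → Prop) (T : X → X → Prop)
    [DecidablePred I] [DecidablePred G] [DecidablePred A] :
    (∃ S : X → Prop,
      (∀ x, I x → S x) ∧
      (∀ x x', S x ∧ G x ∧ T x x' → S x') ∧
      (∀ x, S x ∧ ¬ G x → A x)) ∨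
    (∃ (D : X → Prop) (R : X → ℤ),
      (∃ x₀, I x₀ ∧ D x₀) ∧
      (∀ x, D x ∧ G x → R x > 0 ∧ ∃ x', T x x' ∧ D x' ∧ R x' < R x) ∧
      (∀ x, D x ∧ ¬ G x → ¬ A x)) := by
  classical
  set Bad : X → Prop := fun x => ∃ n, Badn G A T n x with hBad
  by_cases h : ∃ x₀, I x₀ ∧ Bad x₀
  · right
    refine ⟨Bad, fun x => if hx : Bad x then (Nat.find hx : ℤ) else 0, h, ?_, ?_⟩
    · rintro x ⟨hD, hG⟩
      simp only [dif_pos hD]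
      have hfind := Nat.find_spec hD
      set n := Nat.find hD with hn
      match n, hfind with
      | 0, hf => exact absurd hG hf.1
      | m+1, hf =>
        rcases hf with hf | ⟨_, x', hT, hb⟩
        · exact absurd hG hf.1
        · have hD' : Bad x' := ⟨m, hb⟩
          refine ⟨by positivity, x', hT, hD', ?_⟩
          simp only [dif_pos hD']
          have h1 : Nat.find hD' ≤ m := Nat.find_le hb
          have h2 : m < m + 1 := Nat.lt_succ_self m
          exact_mod_cast lt_of_le_of_lt h1 (by omega)
    · rintro x ⟨⟨n, hb⟩, hG⟩
      match n, hb with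
      | 0, hf => exact hf.2
      | m+1, hf =>
        rcases hf with hf | ⟨hG', _⟩
        · exact hf.2
        · exact absurd hG' hG
  · left
    push_neg at h
    refine ⟨fun x => ¬Bad x, fun x hx => h x hx, ?_, ?_⟩
    · rintro x x' ⟨hS, hG, hT⟩ ⟨n, hb⟩
      exact hS ⟨n + 1, Or.inr ⟨hG, x', hT, hb⟩⟩
    · rintro x ⟨hS, hG⟩
      by_contra hA
      exact hS ⟨0, hG, hA⟩
end

section
/- A partial danger invariant does not guarantee a bug: there exists a loop L(I, G, T, A) and a predicate D satisfying the partial danger conditions (∃ x₀, I(x₀) ∧ D(x₀); ∀ x, D(x) ∧ G(x) → ∃ x', T(x,x') ∧ D(x'); ∀ x, D(x) ∧ ¬G(x) → ¬A(x)) such that the loop is safe, i.e., no finite trace from an initial state exits the loop violating the assertion. -/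
theorem partial_danger_not_sound :
    ∃ (I G A : ℤ × ℤ → Prop) (T : ℤ × ℤ → ℤ × ℤ → Prop) (D : ℤ × ℤ → Prop),
      I = (fun s => s.1 = 0 ∧ s.2 = 0) ∧
      G = (fun s => s.1 < 10) ∧
      T = (fun s s' => s'.1 = s.1 ∧ s'.2 = s.2 + 1) ∧
      A = (fun s => s.1 < 10) ∧
      ((∃ s₀, I s₀ ∧ D s₀) ∧
       (∀ s, D s ∧ G s → ∃ s', T s s' ∧ D s') ∧
       (∀ s, D s ∧ ¬ G s → ¬ A s)) ∧
      ¬ (∃ (n : ℕ) (x : ℕ → ℤ × ℤ), I (x 0) ∧ (∀ i < n, G (x i) ∧ T (x i) (x (i+1))) ∧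
          ¬ G (x n) ∧ ¬ A (x n)) := by
  refine ⟨_, _, _, _, fun s => s.1 < 10, rfl, rfl, rfl, rfl, ⟨⟨(0,0), ⟨rfl, rfl⟩, by norm_num⟩,
    fun s ⟨hD, hG⟩ => ⟨(s.1, s.2 + 1), ⟨rfl, rfl⟩, hD⟩,
    fun s ⟨hD, hG⟩ => absurd hD hG⟩, ?_⟩
  rintro ⟨n, x, ⟨h0, -⟩, hstep, hGn, -⟩
  apply hGn
  have key : ∀ i ≤ n, (x i).1 = 0 := by
    intro i hi
    induction i with
    | zero => exact h0
    | succ k ih =>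
      have hk := hstep k (by omega)
      rw [hk.2.1, ih (by omega)]
  simp only [key n le_rfl]; norm_num
end

section
/- A BMC counterexample yields a danger invariant: if x₀, ..., xₙ is a finite sequence of pairwise distinct states with I(x₀), G(xᵢ) ∧ T(xᵢ, xᵢ₊₁) for all i < n, ¬G(xₙ), and ¬A(xₙ), then D(x) := (∃ i ≤ n, x = xᵢ) together with R(x) := n − (the index of x in the sequence, or 0 if x is not in the sequence) is a danger invariant for L(I, G, T, A). -/
theorem bmc_counterexample_yields_danger {X : Type*} [DecidableEq X]
    (I G A : X → Prop) (T : X → X → Prop)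
    (n : ℕ) (x : ℕ → X)
    (hdist : ∀ i j, i ≤ n → j ≤ n → x i = x j → i = j)
    (hI : I (x 0))
    (hstep : ∀ i < n, G (x i) ∧ T (x i) (x (i+1)))
    (hGn : ¬ G (x n)) (hAn : ¬ A (x n))
    (D : X → Prop) (R : X → ℤ)
    (hD : ∀ s, D s ↔ ∃ i ≤ n, s = x i)
    (hR : ∀ i ≤ n, R (x i) = (n : ℤ) - i)
    (hR0 : ∀ s, (¬ ∃ i ≤ n, s = x i) → R s = 0) :
    (∃ x₀, I x₀ ∧ D x₀) ∧
    (∀ s, D s ∧ G s → R s > 0 ∧ ∃ s', T s s' ∧ D s' ∧ R s' < R s) ∧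
    (∀ s, D s ∧ ¬ G s → ¬ A s) := by
  refine ⟨⟨x 0, hI, (hD _).2 ⟨0, Nat.zero_le _, rfl⟩⟩, ?_, ?_⟩
  · intro s ⟨hDs, hGs⟩
    obtain ⟨i, hin, rfl⟩ := (hD s).1 hDs
    have hilt : i < n := by
      rcases lt_or_eq_of_le hin with h | rfl
      · exact h
      · exact absurd hGs hGn
    constructor
    · rw [hR i hin]; omega
    · refine ⟨x (i+1), (hstep i hilt).2, (hD _).2 ⟨i+1, hilt, rfl⟩, ?_⟩
      rw [hR i hin, hR (i+1) hilt]; push_cast; omega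
  · intro s ⟨hDs, hGs⟩
    obtain ⟨i, hin, rfl⟩ := (hD s).1 hDs
    rcases lt_or_eq_of_le hin with h | rfl
    · exact absurd (hstep i h).1 hGs
    · exact hAn
end
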